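/- arXiv:1911.07733 — 3 statements merged into one kernel-verified Lean document; each statement's English description precedes it below -/
import Mathlib

section
/- The binary digits of natural numbers are independent with respect to the relative measure: setting B_j := {n ∈ ℕ : the j-th binary digit of n equals 1} (where the j-th binary digit of n is ⌊n/2^{j-1}⌋ mod 2), each B_j is relatively measurable with μ_R(B_j) = 1/2, and for any finite set of distinct indices j_1 < ⋯ < j_m one has μ_R(B_{j_1} ∩ ⋯ ∩ B_{j_m}) = 2^{-m}. -/
/-- `A ⊆ ℕ` is relatively measurable with relative measure `c`. -/
def relDensTo (A : Set ℕ) (c : ℝ) : Prop :=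
  Filter.Tendsto
    (fun N : ℕ => (∑ n ∈ Finset.Icc 1 N, Set.indicator A (fun _ => (1 : ℝ)) n) / N)
    Filter.atTop (nhds c)

/-- `B j` is the set of naturals whose `j`-th binary digit equals `1`. -/
def binDigitSet (j : ℕ) : Set ℕ := {n : ℕ | n / 2 ^ (j - 1) % 2 = 1}

open Finset

lemma digit_mul_add {t J : ℕ} (h : t < J) (q r : ℕ) :
    (q * 2 ^ J + r) / 2 ^ t % 2 = r / 2 ^ t % 2 := by
  have e : (2:ℕ) ^ J = 2 ^ (J - t - 1) * 2 * 2 ^ t := by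
    have h2 : J = (J - t - 1) + 1 + t := by omega
    rw [h2]; ring_nf
    simp [pow_add, pow_one]
    ring
  rw [e]
  have e2 : q * (2 ^ (J - t - 1) * 2 * 2 ^ t) + r
      = r + (q * 2 ^ (J - t - 1) * 2) * 2 ^ t := by ring
  rw [e2, Nat.add_mul_div_right _ _ (Nat.two_pow_pos t),
    Nat.add_mul_mod_self_right]

lemma digit_top {J r : ℕ} (h : r < 2 ^ J) (q : ℕ) :
    (q * 2 ^ J + r) / 2 ^ J % 2 = q % 2 := by
  rw [add_comm, Nat.add_mul_div_right _ _ (Nat.two_pow_pos J),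
    Nat.div_eq_of_lt h, zero_add]

lemma count_pow (J : ℕ) : ∀ T : Finset ℕ, (∀ t ∈ T, t < J) →
    ((range (2 ^ J)).filter (fun r => ∀ t ∈ T, r / 2 ^ t % 2 = 1)).card
      = 2 ^ (J - T.card) := by
  induction J with
  | zero =>
    intro T hT
    have hTe : T = ∅ := eq_empty_of_forall_notMem fun t ht => absurd (hT t ht) (by omega)
    subst hTe; simp
  | succ J ih =>
    intro T hT
    have hsplit : range (2 ^ (J + 1))
        = range (2 ^ J) ∪ (range (2 ^ J)).map (addLeftEmbedding (2 ^ J)) := by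
      rw [← Finset.range_add, pow_succ, mul_two]
    have hdisj : Disjoint ((range (2 ^ J)).filter (fun r => ∀ t ∈ T, r / 2 ^ t % 2 = 1))
        (((range (2 ^ J)).map (addLeftEmbedding (2 ^ J))).filter
          (fun r => ∀ t ∈ T, r / 2 ^ t % 2 = 1)) := by
      apply Finset.disjoint_filter_filter
      rw [Finset.disjoint_left]
      intro a ha hb
      simp only [mem_range] at ha
      simp only [Finset.mem_map, addLeftEmbedding_apply, mem_range] at hb
      omega
    rw [hsplit, filter_union, card_union_of_disjoint hdisj, Finset.filter_map]
    have hub : ∀ r ∈ range (2 ^ J),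
        ((fun r => ∀ t ∈ T, r / 2 ^ t % 2 = 1) ∘ (addLeftEmbedding (2 ^ J))) r
          ↔ (∀ t ∈ T.erase J, r / 2 ^ t % 2 = 1) := by
      intro r hr
      simp only [Function.comp, addLeftEmbedding_apply, mem_range] at hr ⊢
      constructor
      · intro h t ht
        have ht' := Finset.mem_of_mem_erase ht
        have htJ : t < J := lt_of_le_of_ne (by have := hT t ht'; omega) (Finset.ne_of_mem_erase ht)
        have := h t ht'
        rwa [show (2:ℕ) ^ J + r = 1 * 2 ^ J + r by ring, digit_mul_add htJ] at this
      · intro h t ht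
        rcases eq_or_ne t J with rfl | hne
        · rw [show (2:ℕ) ^ t + r = 1 * 2 ^ t + r by ring, digit_top hr]
        · have htJ : t < J := lt_of_le_of_ne (by have := hT t ht; omega) hne
          rw [show (2:ℕ) ^ J + r = 1 * 2 ^ J + r by ring, digit_mul_add htJ]
          exact h t (Finset.mem_erase.2 ⟨hne, ht⟩)
    rw [Finset.filter_congr hub, Finset.card_map]
    by_cases hJ : J ∈ T
    · have h1 : ((range (2 ^ J)).filter (fun r => ∀ t ∈ T, r / 2 ^ t % 2 = 1)) = ∅ := by
        apply Finset.filter_false_of_mem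
        intro r hr h
        have := h J hJ
        rw [Nat.div_eq_of_lt (mem_range.1 hr)] at this
        simp at this
      rw [h1, Finset.card_empty, zero_add,
        ih (T.erase J) (fun t ht => lt_of_le_of_ne
          (by have := hT t (Finset.mem_of_mem_erase ht); omega) (Finset.ne_of_mem_erase ht)),
        Finset.card_erase_of_mem hJ]
      have hc1 : 1 ≤ T.card := Finset.card_pos.2 ⟨J, hJ⟩
      have hc2 : T.card ≤ J + 1 := by
        have : T ⊆ range (J + 1) := fun t ht => mem_range.2 (hT t ht)
        simpa using Finset.card_le_card this
      congr 1; omega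
    · have hTe : T.erase J = T := Finset.erase_eq_of_notMem hJ
      rw [hTe, ih T (fun t ht => lt_of_le_of_ne (by have := hT t ht; omega)
        (fun h => hJ (h ▸ ht)))]
      have hc2 : T.card ≤ J := by
        have : T ⊆ range J := fun t ht => mem_range.2
          (lt_of_le_of_ne (by have := hT t ht; omega) (fun h => hJ (h ▸ ht)))
        simpa using Finset.card_le_card this
      rw [← two_mul, ← pow_succ']
      congr 1; omega

lemma count_mul {J : ℕ} (T : Finset ℕ) (hT : ∀ t ∈ T, t < J) (q : ℕ) :
    ((range (q * 2 ^ J)).filter (fun r => ∀ t ∈ T, r / 2 ^ t % 2 = 1)).card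
      = q * ((range (2 ^ J)).filter (fun r => ∀ t ∈ T, r / 2 ^ t % 2 = 1)).card := by
  induction q with
  | zero => simp
  | succ q ih =>
    have hsplit : range ((q + 1) * 2 ^ J)
        = range (q * 2 ^ J) ∪ (range (2 ^ J)).map (addLeftEmbedding (q * 2 ^ J)) := by
      rw [← Finset.range_add, add_mul, one_mul]
    have hdisj : Disjoint ((range (q * 2 ^ J)).filter (fun r => ∀ t ∈ T, r / 2 ^ t % 2 = 1))
        (((range (2 ^ J)).map (addLeftEmbedding (q * 2 ^ J))).filter
          (fun r => ∀ t ∈ T, r / 2 ^ t % 2 = 1)) := by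
      apply Finset.disjoint_filter_filter
      rw [Finset.disjoint_left]
      intro a ha hb
      simp only [mem_range] at ha
      simp only [Finset.mem_map, addLeftEmbedding_apply, mem_range] at hb
      omega
    rw [hsplit, filter_union, card_union_of_disjoint hdisj, ih, Finset.filter_map,
      Finset.card_map]
    have hcong : ∀ r ∈ range (2 ^ J),
        ((fun r => ∀ t ∈ T, r / 2 ^ t % 2 = 1) ∘ (addLeftEmbedding (q * 2 ^ J))) r
          ↔ (∀ t ∈ T, r / 2 ^ t % 2 = 1) := by
      intro r _
      simp only [Function.comp, addLeftEmbedding_apply]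
      constructor
      · intro h t ht; have := h t ht; rwa [digit_mul_add (hT t ht)] at this
      · intro h t ht; rw [digit_mul_add (hT t ht)]; exact h t ht
    rw [Finset.filter_congr hcong]
    ring

lemma dens_T (T : Finset ℕ) :
    relDensTo {n : ℕ | ∀ t ∈ T, n / 2 ^ t % 2 = 1} ((2 : ℝ) ^ (-(T.card : ℤ))) := by
  classical
  set J : ℕ := T.sup id + 1 with hJ
  have hT : ∀ t ∈ T, t < J := fun t ht =>
    lt_of_le_of_lt (Finset.le_sup (f := id) ht) (lt_add_one _)
  set P : ℕ := 2 ^ J with hP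
  set k : ℕ := ((range P).filter (fun r => ∀ t ∈ T, r / 2 ^ t % 2 = 1)).card with hk
  have hm : T.card ≤ J := by
    have : T ⊆ range J := fun t ht => mem_range.2 (hT t ht)
    simpa using Finset.card_le_card this
  have hkval : k = 2 ^ (J - T.card) := count_pow J T hT
  have hPpos : (0 : ℝ) < P := by positivity
  -- the target constant equals k / P
  have hc : (2 : ℝ) ^ (-(T.card : ℤ)) = (k : ℝ) / P := by
    rw [hkval, hP, zpow_neg, zpow_natCast]
    push_cast
    rw [inv_eq_one_div, div_eq_div_iff (by positivity) (by positivity), one_mul, ← pow_add]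
    congr 1; omega
  rw [relDensTo, hc]
  -- counting function
  set cnt : ℕ → ℕ := fun N => ((range N).filter (fun r => ∀ t ∈ T, r / 2 ^ t % 2 = 1)).card
    with hcnt
  have cnt_mono : Monotone cnt := fun a b hab =>
    Finset.card_le_card (Finset.filter_subset_filter _ (Finset.range_subset_range.2 hab))
  have cnt_mul : ∀ q, cnt (q * P) = q * k := fun q => count_mul T hT q
  -- the sum equals card of filter over Icc
  have hsum : ∀ N : ℕ, (∑ n ∈ Finset.Icc 1 N,
      Set.indicator {n : ℕ | ∀ t ∈ T, n / 2 ^ t % 2 = 1} (fun _ => (1 : ℝ)) n)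
      = (((Finset.Icc 1 N).filter (fun r => ∀ t ∈ T, r / 2 ^ t % 2 = 1)).card : ℝ) := by
    intro N
    rw [← Finset.sum_boole]
    apply Finset.sum_congr rfl
    intro n _
    simp [Set.indicator_apply, Set.mem_setOf_eq]
  -- estimate
  set A : ℕ → ℕ := fun N => ((Finset.Icc 1 N).filter (fun r => ∀ t ∈ T, r / 2 ^ t % 2 = 1)).card
    with hA
  have hAc : ∀ N, A N ≤ cnt (N + 1) ∧ cnt (N + 1) ≤ A N + 1 := by
    intro N
    have hins : range (N + 1) = insert 0 (Finset.Icc 1 N) := by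
      ext x; simp [Nat.lt_succ_iff]; omega
    have := Finset.card_filter_le (insert 0 (Finset.Icc 1 N))
      (fun r => ∀ t ∈ T, r / 2 ^ t % 2 = 1)
    constructor
    · apply Finset.card_le_card
      apply Finset.filter_subset_filter
      intro x hx
      simp only [Finset.mem_Icc] at hx
      simp [Nat.lt_succ_iff]; omega
    · rw [hcnt]
      simp only [hins]
      calc (Finset.filter (fun r => ∀ t ∈ T, r / 2 ^ t % 2 = 1) (insert 0 (Finset.Icc 1 N))).card
          ≤ (insert 0 (Finset.filter (fun r => ∀ t ∈ T, r / 2 ^ t % 2 = 1) (Finset.Icc 1 N))).card := by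
            apply Finset.card_le_card
            intro x hx
            simp only [Finset.mem_filter, Finset.mem_insert] at hx ⊢
            tauto
        _ ≤ A N + 1 := by
            have := Finset.card_insert_le 0
              (Finset.filter (fun r => ∀ t ∈ T, r / 2 ^ t % 2 = 1) (Finset.Icc 1 N))
            simpa [hA] using this
  -- real estimate on cnt
  have hcntest : ∀ N : ℕ, |((cnt N : ℝ)) - N * k / P| ≤ k := by
    intro N
    set q : ℕ := N / P with hq
    have hq1 : q * P ≤ N := Nat.div_mul_le_self N P
    have hq2 : N < (q + 1) * P := by
      refine (Nat.div_lt_iff_lt_mul (show 0 < P by positivity)).1 ?_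
      omega
    have hlow : (q * k : ℕ) ≤ cnt N := by rw [← cnt_mul]; exact cnt_mono hq1
    have hhigh : cnt N ≤ q * k + k := by
      have := cnt_mono (le_of_lt hq2)
      rwa [cnt_mul (q + 1), add_mul, one_mul] at this
    rw [abs_le]
    constructor
    · have h1 : (N : ℝ) * k / P ≤ (q + 1) * k := by
        rw [div_le_iff₀ hPpos]
        have : (N : ℝ) ≤ (q + 1) * P := by exact_mod_cast le_of_lt hq2
        nlinarith [Nat.cast_nonneg (α := ℝ) k]
      have h2 : ((q : ℝ) + 1) * k - k = q * k := by ring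
      have h3 : ((q * k : ℕ) : ℝ) ≤ (cnt N : ℝ) := by exact_mod_cast hlow
      push_cast at h3
      linarith
    · have h1 : ((q : ℝ)) * k ≤ (N : ℝ) * k / P := by
        rw [le_div_iff₀ hPpos]
        have : ((q : ℝ)) * P ≤ N := by exact_mod_cast hq1
        nlinarith [Nat.cast_nonneg (α := ℝ) k]
      have h3 : (cnt N : ℝ) ≤ (q : ℝ) * k + k := by exact_mod_cast hhigh
      linarith
  -- combine: |A N - N k / P| ≤ 2k+1
  have hAest : ∀ N : ℕ, |((A N : ℝ)) - N * k / P| ≤ 2 * k + 1 := by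
    intro N
    obtain ⟨h1, h2⟩ := hAc N
    have h3 := hcntest (N + 1)
    have hk1 : (k : ℝ) / P ≤ k := by
      rw [div_le_iff₀ hPpos]
      have hP1 : (1 : ℝ) ≤ P := by exact_mod_cast Nat.one_le_two_pow
      nlinarith [Nat.cast_nonneg (α := ℝ) k]
    have e1 : ((N : ℝ) + 1) * k / P - N * k / P = k / P := by ring
    have h1' : ((A N : ℝ)) ≤ (cnt (N + 1) : ℝ) := by exact_mod_cast h1
    have h2' : ((cnt (N + 1) : ℝ)) ≤ (A N : ℝ) + 1 := by exact_mod_cast h2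
    have hkP : (0:ℝ) ≤ (k:ℝ)/P := by positivity
    rw [abs_le] at h3 ⊢
    push_cast at h3
    constructor <;> nlinarith [h3.1, h3.2]
  -- finish with squeeze
  rw [← tendsto_sub_nhds_zero_iff]
  apply squeeze_zero_norm' (a := fun N : ℕ => (2 * k + 1) / N)
  · filter_upwards [Filter.eventually_ge_atTop 1] with N hN
    have hNpos : (0 : ℝ) < N := by exact_mod_cast hN
    rw [hsum N, Real.norm_eq_abs, div_sub' (ne_of_gt hNpos), abs_div,
      abs_of_pos hNpos, div_le_div_iff₀ hNpos hNpos]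
    show |(A N : ℝ) - ↑N * (↑k / ↑P)| * ↑N ≤ (2 * ↑k + 1) * ↑N
    have e : ((A N : ℝ)) - ↑N * (↑k / ↑P) = ((A N : ℝ)) - ↑N * ↑k / ↑P := by ring
    rw [e]
    nlinarith [hAest N, abs_nonneg ((A N : ℝ) - N * k / P)]
  · exact tendsto_const_div_atTop_nhds_zero_nat _

theorem binary_digits_of_naturals_independent :
    (∀ j : ℕ, 1 ≤ j → relDensTo (binDigitSet j) (1 / 2)) ∧
    (∀ (m : ℕ) (j : Fin m → ℕ), (∀ i, 1 ≤ j i) → StrictMono j →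
      relDensTo (⋂ i, binDigitSet (j i)) ((2 : ℝ) ^ (-(m : ℤ)))) := by
  constructor
  · intro j hj
    have h := dens_T {j - 1}
    have hset : {n : ℕ | ∀ t ∈ ({j - 1} : Finset ℕ), n / 2 ^ t % 2 = 1} = binDigitSet j := by
      ext n; simp [binDigitSet]
    have hcard : ((({j - 1} : Finset ℕ)).card : ℤ) = 1 := by simp
    rw [hset, hcard] at h
    convert h using 2
    norm_num
  · intro m j hj hmono
    have hinj : Function.Injective (fun i : Fin m => j i - 1) := by
      intro a b hab
      simp only at hab
      by_contra hne
      rcases lt_or_gt_of_ne hne with h | h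
      · have := hmono h; have := hj a; omega
      · have := hmono h; have := hj b; omega
    set T : Finset ℕ := Finset.image (fun i : Fin m => j i - 1) Finset.univ with hT
    have hcard : T.card = m := by
      rw [hT, Finset.card_image_of_injective _ hinj, Finset.card_univ, Fintype.card_fin]
    have h := dens_T T
    have hset : {n : ℕ | ∀ t ∈ T, n / 2 ^ t % 2 = 1} = ⋂ i, binDigitSet (j i) := by
      ext n
      simp only [Set.mem_setOf_eq, Set.mem_iInter, hT, Finset.mem_image, Finset.mem_univ,
        true_and, binDigitSet]
      constructor
      · intro h i; exact h _ ⟨i, rfl⟩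
      · rintro h t ⟨i, rfl⟩; exact h i
    rw [hset, hcard] at h
    exact h
end

section
/- Convolution formula for independent relatively measurable sequences: if x, y : ℕ → ℤ are bounded, relatively measurable, and μ_R-independent, then ρ_{x+y}(k) = Σ_{j∈ℤ} ρ_x(j) ρ_y(k−j) for all k ∈ ℤ, where ρ_x(k) := μ_R({n : x_n = k}). -/
lemma relDensTo_unique {A : Set ℕ} {c c' : ℝ} (h : relDensTo A c) (h' : relDensTo A c') :
    c = c' := tendsto_nhds_unique h h'

lemma relDensTo_empty : relDensTo (∅ : Set ℕ) 0 := by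
  have : (fun N : ℕ => (∑ n ∈ Finset.Icc 1 N,
      Set.indicator (∅ : Set ℕ) (fun _ => (1 : ℝ)) n) / N) = fun _ => (0 : ℝ) := by
    funext N; simp
  rw [relDensTo, this]
  exact tendsto_const_nhds

lemma relDensTo_biUnion {ι : Type*} (s : Finset ι) (A : ι → Set ℕ) (c : ι → ℝ)
    (hA : ∀ i ∈ s, relDensTo (A i) (c i))
    (hdisj : ∀ i ∈ s, ∀ j ∈ s, i ≠ j → Disjoint (A i) (A j)) :
    relDensTo (⋃ i ∈ s, A i) (∑ i ∈ s, c i) := by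
  have hind : ∀ n : ℕ, Set.indicator (⋃ i ∈ s, A i) (fun _ => (1 : ℝ)) n
      = ∑ i ∈ s, Set.indicator (A i) (fun _ => (1 : ℝ)) n := by
    intro n
    by_cases hn : n ∈ ⋃ i ∈ s, A i
    · obtain ⟨i, hi, hni⟩ : ∃ i ∈ s, n ∈ A i := by simpa using hn
      rw [Set.indicator_of_mem hn]
      rw [Finset.sum_eq_single i]
      · rw [Set.indicator_of_mem hni]
      · intro j hj hji
        apply Set.indicator_of_notMem
        intro hnj
        exact Set.disjoint_left.mp (hdisj j hj i hi hji) hnj hni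
      · intro h; exact absurd hi h
    · rw [Set.indicator_of_notMem hn]
      symm
      apply Finset.sum_eq_zero
      intro i hi
      apply Set.indicator_of_notMem
      intro hni; exact hn (Set.mem_biUnion hi hni)
  have heq : (fun N : ℕ => (∑ n ∈ Finset.Icc 1 N,
        Set.indicator (⋃ i ∈ s, A i) (fun _ => (1 : ℝ)) n) / N)
      = fun N : ℕ => ∑ i ∈ s,
        (∑ n ∈ Finset.Icc 1 N, Set.indicator (A i) (fun _ => (1 : ℝ)) n) / N := by
    funext N
    rw [← Finset.sum_div]
    congr 1
    rw [← Finset.sum_comm]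
    exact Finset.sum_congr rfl fun n _ => hind n
  rw [relDensTo, heq]
  exact tendsto_finset_sum s hA

theorem convolution_formula_for_independent_sequences
    (x y : ℕ → ℤ) (K : ℤ) (hbx : ∀ n, |x n| ≤ K) (hby : ∀ n, |y n| ≤ K)
    -- `x` and `y` are relatively measurable and `μ_R`-independent: for all intervals
    -- `I, J ⊆ ℝ` the preimages have densities and the product rule holds.
    (hindep : ∀ I J : Set ℝ, I.OrdConnected → J.OrdConnected →
      ∃ cI cJ : ℝ, relDensTo {n : ℕ | (x n : ℝ) ∈ I} cI ∧
        relDensTo {n : ℕ | (y n : ℝ) ∈ J} cJ ∧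
        relDensTo {n : ℕ | (x n : ℝ) ∈ I ∧ (y n : ℝ) ∈ J} (cI * cJ)) :
    ∃ ρx ρy ρxy : ℤ → ℝ,
      (∀ k : ℤ, relDensTo {n : ℕ | x n = k} (ρx k)) ∧
      (∀ k : ℤ, relDensTo {n : ℕ | y n = k} (ρy k)) ∧
      (∀ k : ℤ, relDensTo {n : ℕ | x n + y n = k} (ρxy k)) ∧
      (∀ k : ℤ, ρxy k = ∑' j : ℤ, ρx j * ρy (k - j)) := by
  classical
  -- existence of densities for level sets of x
  have hx : ∀ k : ℤ, ∃ c, relDensTo {n : ℕ | x n = k} c := by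
    intro k
    obtain ⟨cI, cJ, h1, _, _⟩ := hindep {(k : ℝ)} Set.univ
      Set.ordConnected_singleton Set.ordConnected_univ
    refine ⟨cI, ?_⟩
    have hset : {n : ℕ | x n = k} = {n : ℕ | (x n : ℝ) ∈ ({(k : ℝ)} : Set ℝ)} := by
      ext n; simp [Int.cast_inj]
    rw [hset]; exact h1
  have hy : ∀ k : ℤ, ∃ c, relDensTo {n : ℕ | y n = k} c := by
    intro k
    obtain ⟨cI, cJ, _, h2, _⟩ := hindep Set.univ {(k : ℝ)}
      Set.ordConnected_univ Set.ordConnected_singleton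
    refine ⟨cJ, ?_⟩
    have hset : {n : ℕ | y n = k} = {n : ℕ | (y n : ℝ) ∈ ({(k : ℝ)} : Set ℝ)} := by
      ext n; simp [Int.cast_inj]
    rw [hset]; exact h2
  set ρx : ℤ → ℝ := fun k => Classical.choose (hx k) with hρx_def
  have hρx : ∀ k, relDensTo {n : ℕ | x n = k} (ρx k) := fun k => Classical.choose_spec (hx k)
  set ρy : ℤ → ℝ := fun k => Classical.choose (hy k) with hρy_def
  have hρy : ∀ k, relDensTo {n : ℕ | y n = k} (ρy k) := fun k => Classical.choose_spec (hy k)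
  -- vanishing of ρx outside [-K, K]
  have hxzero : ∀ j : ℤ, j ∉ Finset.Icc (-K) K → ρx j = 0 := by
    intro j hj
    have hempty : {n : ℕ | x n = j} = (∅ : Set ℕ) := by
      ext n
      simp only [Set.mem_setOf_eq, Set.mem_empty_iff_false, iff_false]
      intro h
      apply hj
      rw [Finset.mem_Icc, ← h]
      exact abs_le.mp (hbx n)
    have := hρx j
    rw [hempty] at this
    exact relDensTo_unique this relDensTo_empty
  -- density of the pair events
  have hpair : ∀ j m : ℤ,
      relDensTo {n : ℕ | x n = j ∧ y n = m} (ρx j * ρy m) := by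
    intro j m
    obtain ⟨cI, cJ, h1, h2, h3⟩ := hindep {(j : ℝ)} {(m : ℝ)}
      Set.ordConnected_singleton Set.ordConnected_singleton
    have e1 : {n : ℕ | (x n : ℝ) ∈ ({(j : ℝ)} : Set ℝ)} = {n : ℕ | x n = j} := by
      ext n; simp [Int.cast_inj]
    have e2 : {n : ℕ | (y n : ℝ) ∈ ({(m : ℝ)} : Set ℝ)} = {n : ℕ | y n = m} := by
      ext n; simp [Int.cast_inj]
    have e3 : {n : ℕ | (x n : ℝ) ∈ ({(j : ℝ)} : Set ℝ) ∧ (y n : ℝ) ∈ ({(m : ℝ)} : Set ℝ)}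
        = {n : ℕ | x n = j ∧ y n = m} := by
      ext n; simp [Int.cast_inj]
    rw [e1] at h1; rw [e2] at h2; rw [e3] at h3
    have hcI : cI = ρx j := relDensTo_unique h1 (hρx j)
    have hcJ : cJ = ρy m := relDensTo_unique h2 (hρy m)
    rwa [hcI, hcJ] at h3
  -- the convolution density
  refine ⟨ρx, ρy, fun k => ∑ j ∈ Finset.Icc (-K) K, ρx j * ρy (k - j), hρx, hρy, ?_, ?_⟩
  · intro k
    have hcover : {n : ℕ | x n + y n = k}
        = ⋃ j ∈ Finset.Icc (-K) K, {n : ℕ | x n = j ∧ y n = k - j} := by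
      ext n
      simp only [Set.mem_setOf_eq, Set.mem_iUnion, Finset.mem_Icc, exists_prop]
      constructor
      · intro h
        exact ⟨x n, abs_le.mp (hbx n), rfl, by omega⟩
      · rintro ⟨j, _, hxj, hyj⟩
        omega
    rw [hcover]
    apply relDensTo_biUnion _ _ _ (fun j _ => hpair j (k - j))
    intro i _ j _ hij
    rw [Set.disjoint_left]
    rintro n ⟨h1, _⟩ ⟨h2, _⟩
    exact hij (h1 ▸ h2 ▸ rfl)
  · intro k
    symm
    apply tsum_eq_sum
    intro j hj
    rw [hxzero j hj, zero_mul]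
end

section
/- The two formulations of the Erdős–Kac theorem are equivalent in the following direction: the Erdős–Kac theorem with normalization at N implies the version with normalization at n, i.e., assuming lim_{N→∞} (1/N)|{n ≤ N : (ω(n) − ln ln N)/√(ln ln N) ≤ b}| = Φ(b) for all b ∈ ℝ, it follows that for all real a < b, lim_{N→∞} (1/N) |{n ∈ {1,…,N} : a ≤ (ω(n) − ln ln n)/√(ln ln n) ≤ b}| = (1/√(2π)) ∫_a^b e^{−x²/2} dx. -/
open Filter

/-- `ω(n)`: the number of distinct prime factors of `n`. -/
def omegaPF (n : ℕ) : ℕ := n.primeFactors.card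

/-- The standard normal distribution function. -/
noncomputable def stdNormalCDF (b : ℝ) : ℝ :=
  (1 / Real.sqrt (2 * Real.pi)) * ∫ x in Set.Iic b, Real.exp (-x ^ 2 / 2)


section ErdosKacAux
open MeasureTheory Set

noncomputable def fEK (n : ℕ) : ℝ :=
  ((omegaPF n : ℝ) - Real.log (Real.log n)) / Real.sqrt (Real.log (Real.log n))

noncomputable def gEK (N n : ℕ) : ℝ :=
  ((omegaPF n : ℝ) - Real.log (Real.log N)) / Real.sqrt (Real.log (Real.log N))

lemma gauss_integrable : MeasureTheory.Integrable (fun x : ℝ => Real.exp (-x ^ 2 / 2)) := by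
  have h := integrable_exp_neg_mul_sq (show (0:ℝ) < 1/2 by norm_num)
  refine h.congr ?_
  filter_upwards with x
  ring_nf

lemma stdNormalCDF_sub (a b : ℝ) :
    stdNormalCDF b - stdNormalCDF a
      = (1 / Real.sqrt (2 * Real.pi)) * ∫ x in a..b, Real.exp (-x ^ 2 / 2) := by
  unfold stdNormalCDF
  rw [← mul_sub, intervalIntegral.integral_Iic_sub_Iic gauss_integrable.integrableOn
    gauss_integrable.integrableOn]

lemma sqrt_two_pi_pos : 1 ≤ Real.sqrt (2 * Real.pi) := by
  rw [show (1:ℝ) = Real.sqrt 1 by simp]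
  apply Real.sqrt_le_sqrt
  nlinarith [Real.pi_gt_three]

lemma stdNormalCDF_incr {t s : ℝ} (h : t ≤ s) :
    stdNormalCDF s - stdNormalCDF t ≤ s - t := by
  rw [stdNormalCDF_sub]
  have h1 : ∫ x in t..s, Real.exp (-x ^ 2 / 2) ≤ ∫ x in t..s, (1:ℝ) := by
    apply intervalIntegral.integral_mono_on h
    · exact gauss_integrable.intervalIntegrable
    · exact intervalIntegrable_const
    · intro x _
      rw [Real.exp_le_one_iff]
      nlinarith [sq_nonneg x]
  have h2 : ∫ x in t..s, (1:ℝ) = s - t := by simp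
  have h3 : 0 ≤ ∫ x in t..s, Real.exp (-x ^ 2 / 2) := by
    apply intervalIntegral.integral_nonneg h
    intro x _; positivity
  have h4 := sqrt_two_pi_pos
  have h5 : 0 < Real.sqrt (2 * Real.pi) := by linarith
  rw [div_mul_eq_mul_div, one_mul, div_le_iff₀ h5]
  nlinarith

lemma stdNormalCDF_mono {t s : ℝ} (h : t ≤ s) : stdNormalCDF t ≤ stdNormalCDF s := by
  have h1 := stdNormalCDF_sub t s
  have h3 : 0 ≤ ∫ x in t..s, Real.exp (-x ^ 2 / 2) := by
    apply intervalIntegral.integral_nonneg h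
    intro x _; positivity
  have h5 : (0:ℝ) < Real.sqrt (2 * Real.pi) := by linarith [sqrt_two_pi_pos]
  have h6 : 0 ≤ 1 / Real.sqrt (2 * Real.pi) * ∫ x in t..s, Real.exp (-x ^ 2 / 2) := by positivity
  linarith

lemma real_sqrt_tendsto : Tendsto Real.sqrt atTop atTop := by
  apply Filter.tendsto_atTop_atTop.2
  intro b
  refine ⟨b ^ 2, fun a ha => ?_⟩
  have h1 : b ≤ |b| := le_abs_self b
  have h2 : Real.sqrt (b ^ 2) ≤ Real.sqrt a := Real.sqrt_le_sqrt ha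
  rw [Real.sqrt_sq_eq_abs] at h2
  linarith

lemma loglog_tendsto : Tendsto (fun N : ℕ => Real.log (Real.log N)) atTop atTop :=
  (Real.tendsto_log_atTop.comp Real.tendsto_log_atTop).comp tendsto_natCast_atTop_atTop

lemma sqrtN_div_tendsto : Tendsto (fun N : ℕ => (Nat.sqrt N : ℝ) / N) atTop (nhds 0) := by
  have h1 : Tendsto (fun N : ℕ => 1 / Real.sqrt N) atTop (nhds 0) :=
    tendsto_const_nhds.div_atTop (real_sqrt_tendsto.comp tendsto_natCast_atTop_atTop)
  apply squeeze_zero' (g := fun N : ℕ => 1 / Real.sqrt N) ?_ ?_ h1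
  · filter_upwards with N; positivity
  · filter_upwards [eventually_ge_atTop 1] with N hN
    have hNpos : (0:ℝ) < N := by exact_mod_cast hN
    have h2 : (Nat.sqrt N : ℝ) ≤ Real.sqrt N := Real.nat_sqrt_le_real_sqrt
    have h3 : Real.sqrt N * Real.sqrt N = N := Real.mul_self_sqrt hNpos.le
    have h4 : 0 < Real.sqrt N := Real.sqrt_pos.2 hNpos
    rw [div_le_div_iff₀ hNpos (by positivity)]
    nlinarith

lemma core_close (w ℓ L M δ : ℝ) (hℓ : 1 ≤ ℓ) (hL : ℓ ≤ L) (hM : 0 ≤ M)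
    (hB : M * (L - ℓ) / ℓ + (L - ℓ) / Real.sqrt ℓ < δ)
    (h : |(w - ℓ) / Real.sqrt ℓ| ≤ M ∨ |(w - L) / Real.sqrt L| ≤ M) :
    |(w - L) / Real.sqrt L - (w - ℓ) / Real.sqrt ℓ| < δ := by
  set sl := Real.sqrt ℓ with hsl_def
  set sL := Real.sqrt L with hsL_def
  have hsl2 : sl ^ 2 = ℓ := Real.sq_sqrt (by linarith)
  have hsL2 : sL ^ 2 = L := Real.sq_sqrt (by linarith)
  have h1 : 1 ≤ sl := Real.one_le_sqrt.2 hℓ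
  have h2 : sl ≤ sL := Real.sqrt_le_sqrt hL
  have hslpos : 0 < sl := by linarith
  have hsLpos : 0 < sL := by linarith
  rcases h with hy | hx
  · have key : (w - L) / sL - (w - ℓ) / sl
        = ((w - ℓ) / sl * (sl - sL) - (L - ℓ)) / sL := by
      field_simp
      ring_nf
    rw [key, abs_div, abs_of_pos hsLpos]
    have tri : |(w - ℓ) / sl * (sl - sL) - (L - ℓ)|
        ≤ M * (sL - sl) + (L - ℓ) := by
      have := abs_sub ((w - ℓ) / sl * (sl - sL)) (L - ℓ)
      have e1 : |(w - ℓ) / sl * (sl - sL)| ≤ M * (sL - sl) := by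
        rw [abs_mul]
        have : |sl - sL| = sL - sl := by rw [abs_of_nonpos (by linarith)]; ring
        rw [this]
        exact mul_le_mul_of_nonneg_right hy (by linarith) |>.trans
          (mul_le_mul_of_nonneg_left le_rfl hM)
      have e2 : |(L - ℓ)| = L - ℓ := abs_of_nonneg (by linarith)
      calc |(w - ℓ) / sl * (sl - sL) - (L - ℓ)|
          ≤ |(w - ℓ) / sl * (sl - sL)| + |L - ℓ| := abs_sub _ _
        _ ≤ M * (sL - sl) + (L - ℓ) := by rw [e2]; linarith
    refine lt_of_le_of_lt ?_ hB
    rw [div_le_iff₀ hsLpos]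
    have hstep : (M * (sL - sl) + (L - ℓ)) ≤ (M * (L - ℓ) / ℓ + (L - ℓ) / sl) * sL := by
      have f1 : (sL - sl) * (sL + sl) = L - ℓ := by nlinarith
      have f2 : M * (sL - sl) ≤ M * (L - ℓ) / ℓ * sL := by
        rw [div_mul_eq_mul_div, le_div_iff₀ (by linarith : (0:ℝ) < ℓ)]
        have g1 : sl * sl ≤ (sL + sl) * sL := by nlinarith
        have f2' : (sL - sl) * ℓ ≤ (L - ℓ) * sL :=
          calc (sL - sl) * ℓ = (sL - sl) * (sl * sl) := by rw [← hsl2]; ring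
            _ ≤ (sL - sl) * ((sL + sl) * sL) := mul_le_mul_of_nonneg_left g1 (sub_nonneg.2 h2)
            _ = (L - ℓ) * sL := by rw [← f1]; ring
        calc M * (sL - sl) * ℓ = M * ((sL - sl) * ℓ) := by ring
          _ ≤ M * ((L - ℓ) * sL) := mul_le_mul_of_nonneg_left f2' hM
          _ = M * (L - ℓ) * sL := by ring
      have f3 : (L - ℓ) ≤ (L - ℓ) / sl * sL := by
        rw [div_mul_eq_mul_div, le_div_iff₀ hslpos]
        nlinarith
      linarith
    exact le_trans tri hstep
  · have key : (w - L) / sL - (w - ℓ) / sl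
        = ((w - L) / sL * (sl - sL) - (L - ℓ)) / sl := by
      field_simp
      ring_nf
    rw [key, abs_div, abs_of_pos hslpos]
    have tri : |(w - L) / sL * (sl - sL) - (L - ℓ)|
        ≤ M * (sL - sl) + (L - ℓ) := by
      have e1 : |(w - L) / sL * (sl - sL)| ≤ M * (sL - sl) := by
        rw [abs_mul]
        have : |sl - sL| = sL - sl := by rw [abs_of_nonpos (by linarith)]; ring
        rw [this]
        exact mul_le_mul_of_nonneg_right hx (by linarith)
      have e2 : |(L - ℓ)| = L - ℓ := abs_of_nonneg (by linarith)
      calc |(w - L) / sL * (sl - sL) - (L - ℓ)|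
          ≤ |(w - L) / sL * (sl - sL)| + |L - ℓ| := abs_sub _ _
        _ ≤ M * (sL - sl) + (L - ℓ) := by rw [e2]; linarith
    refine lt_of_le_of_lt ?_ hB
    rw [div_le_iff₀ hslpos]
    have f1 : (sL - sl) * (sL + sl) = L - ℓ := by nlinarith
    have f2 : M * (sL - sl) ≤ M * (L - ℓ) / ℓ * sl := by
      rw [div_mul_eq_mul_div, le_div_iff₀ (by linarith : (0:ℝ) < ℓ)]
      have g1 : sl * sl ≤ (sL + sl) * sl := by nlinarith
      have f2' : (sL - sl) * ℓ ≤ (L - ℓ) * sl :=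
        calc (sL - sl) * ℓ = (sL - sl) * (sl * sl) := by rw [← hsl2]; ring
          _ ≤ (sL - sl) * ((sL + sl) * sl) := mul_le_mul_of_nonneg_left g1 (sub_nonneg.2 h2)
          _ = (L - ℓ) * sl := by rw [← f1]; ring
      calc M * (sL - sl) * ℓ = M * ((sL - sl) * ℓ) := by ring
        _ ≤ M * ((L - ℓ) * sl) := mul_le_mul_of_nonneg_left f2' hM
        _ = M * (L - ℓ) * sl := by ring
    have f3 : (L - ℓ) ≤ (L - ℓ) / sl * sl := by
      rw [div_mul_cancel₀ _ (ne_of_gt hslpos)]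
    linarith

lemma key_eventually (δ M : ℝ) (hδ : 0 < δ) (hM : 0 ≤ M) :
    ∀ᶠ N : ℕ in atTop, ∀ n : ℕ, Nat.sqrt N < n → n ≤ N →
      1 ≤ Real.log (Real.log n) ∧ Real.log (Real.log n) ≤ Real.log (Real.log N) ∧
      M * (Real.log (Real.log N) - Real.log (Real.log n)) / Real.log (Real.log n)
        + (Real.log (Real.log N) - Real.log (Real.log n)) / Real.sqrt (Real.log (Real.log n))
        < δ := by
  have hLt := loglog_tendsto
  have hlogt : Tendsto (fun N : ℕ => Real.log N) atTop atTop :=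
    Real.tendsto_log_atTop.comp tendsto_natCast_atTop_atTop
  have hu : Tendsto (fun N : ℕ => Real.log (Real.log N) - Real.log 2) atTop atTop := by
    simpa [sub_eq_add_neg] using tendsto_atTop_add_const_right atTop (-Real.log 2) hLt
  have hBt : Tendsto (fun N : ℕ =>
      M * Real.log 2 / (Real.log (Real.log N) - Real.log 2)
        + Real.log 2 / Real.sqrt (Real.log (Real.log N) - Real.log 2)) atTop (nhds 0) := by
    have t1 := tendsto_const_nhds (x := M * Real.log 2) (f := atTop (α := ℕ)) |>.div_atTop hu
    have t2 := tendsto_const_nhds (x := Real.log 2) (f := atTop (α := ℕ)) |>.div_atTop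
      (real_sqrt_tendsto.comp hu)
    simpa using t1.add t2
  have hl2 : 0 ≤ Real.log 2 := Real.log_nonneg one_le_two
  filter_upwards [hLt.eventually_ge_atTop (2 + Real.log 2), hlogt.eventually_ge_atTop 2,
    hBt.eventually (gt_mem_nhds hδ), eventually_ge_atTop 1] with N h1 h2 h3 h4
  intro n hn1 hn2
  set L := Real.log (Real.log N) with hLdef
  set ℓ := Real.log (Real.log n) with hldef
  have hn0 : 0 < n := lt_of_le_of_lt (Nat.zero_le _) hn1
  have hNpos : (0:ℝ) < N := by exact_mod_cast h4
  have hnpos : (0:ℝ) < n := by exact_mod_cast hn0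
  have hnN : (n:ℝ) ≤ N := by exact_mod_cast hn2
  have hNlt : (N:ℝ) < (n:ℝ) * n := by
    have h5 : N < (Nat.sqrt N + 1) * (Nat.sqrt N + 1) := Nat.lt_succ_sqrt N
    have h6 : N < n * n := lt_of_lt_of_le h5 (Nat.mul_le_mul hn1 hn1)
    exact_mod_cast h6
  have hlogn2 : Real.log N / 2 < Real.log n := by
    have hlt : Real.log N < Real.log ((n:ℝ) * n) := Real.log_lt_log hNpos hNlt
    rw [Real.log_mul (ne_of_gt hnpos) (ne_of_gt hnpos)] at hlt
    linarith
  have hlogn_pos : 0 < Real.log n := by linarith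
  have hle : Real.log n ≤ Real.log N := Real.log_le_log hnpos hnN
  have hℓL : ℓ ≤ L := Real.log_le_log hlogn_pos hle
  have hℓlb : L - Real.log 2 ≤ ℓ := by
    have h7 : Real.log (Real.log N / 2) ≤ ℓ :=
      Real.log_le_log (by linarith) (le_of_lt hlogn2)
    rw [Real.log_div (by linarith) two_ne_zero] at h7
    linarith
  have hℓ1 : 1 ≤ ℓ := by linarith
  refine ⟨hℓ1, hℓL, ?_⟩
  have hd1 : (0:ℝ) < L - Real.log 2 := by linarith
  have hLml : L - ℓ ≤ Real.log 2 := by linarith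
  have t1 : M * (L - ℓ) / ℓ ≤ M * Real.log 2 / (L - Real.log 2) :=
    div_le_div₀ (by positivity) (mul_le_mul_of_nonneg_left hLml hM) hd1 hℓlb
  have t2 : (L - ℓ) / Real.sqrt ℓ ≤ Real.log 2 / Real.sqrt (L - Real.log 2) :=
    div_le_div₀ hl2 hLml (Real.sqrt_pos.2 hd1) (Real.sqrt_le_sqrt hℓlb)
  linarith

lemma indicator_sqrt_sum (N : ℕ) :
    (∑ n ∈ Finset.Icc 1 N, if n ≤ Nat.sqrt N then (1:ℝ) else 0) ≤ (Nat.sqrt N : ℝ) := by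
  rw [Finset.sum_boole]
  have hsub : (Finset.Icc 1 N).filter (fun n => n ≤ Nat.sqrt N)
      ⊆ Finset.Icc 1 (Nat.sqrt N) := by
    intro x hx
    simp only [Finset.mem_filter, Finset.mem_Icc] at hx ⊢
    exact ⟨hx.1.1, hx.2⟩
  have h1 := Finset.card_le_card hsub
  have h2 : (Finset.Icc 1 (Nat.sqrt N)).card = Nat.sqrt N := by
    rw [Nat.card_Icc]; omega
  exact_mod_cast h1.trans_eq h2

lemma count_upper (N : ℕ) (a b δ : ℝ) (hδ : 0 < δ) (hab : a < b)
    (h0 : ∀ n : ℕ, Nat.sqrt N < n → n ≤ N →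
      1 ≤ Real.log (Real.log n) ∧ Real.log (Real.log n) ≤ Real.log (Real.log N) ∧
      (|a| + |b| + δ + 1) * (Real.log (Real.log N) - Real.log (Real.log n)) /
          Real.log (Real.log n)
        + (Real.log (Real.log N) - Real.log (Real.log n)) / Real.sqrt (Real.log (Real.log n))
        < δ) :
    (∑ n ∈ Finset.Icc 1 N, if a ≤ fEK n ∧ fEK n ≤ b then (1:ℝ) else 0)
      ≤ (Nat.sqrt N : ℝ)
        + ((∑ n ∈ Finset.Icc 1 N, if gEK N n ≤ b + δ then (1:ℝ) else 0)
          - ∑ n ∈ Finset.Icc 1 N, if gEK N n ≤ a - δ then (1:ℝ) else 0) := by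
  set M := |a| + |b| + δ + 1 with hM
  have hM0 : 0 ≤ M := by positivity
  have key : ∀ n ∈ Finset.Icc 1 N,
      (if a ≤ fEK n ∧ fEK n ≤ b then (1:ℝ) else 0)
        ≤ (if n ≤ Nat.sqrt N then (1:ℝ) else 0)
          + ((if gEK N n ≤ b + δ then (1:ℝ) else 0)
            - (if gEK N n ≤ a - δ then (1:ℝ) else 0)) := by
    intro n hn
    rw [Finset.mem_Icc] at hn
    by_cases hK : n ≤ Nat.sqrt N
    · rw [if_pos hK]
      split_ifs <;> linarith
    · rw [if_neg hK]
      obtain ⟨hℓ1, hℓL, hbound⟩ := h0 n (not_le.1 hK) hn.2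
      by_cases hcond : a ≤ fEK n ∧ fEK n ≤ b
      · have habs : |fEK n| ≤ M := by
          rw [abs_le, hM]
          constructor
          · linarith [hcond.1, neg_abs_le a, abs_nonneg b]
          · linarith [hcond.2, le_abs_self b, abs_nonneg a]
        have hclose : |gEK N n - fEK n| < δ :=
          core_close (omegaPF n) _ _ M δ hℓ1 hℓL hM0 hbound (Or.inl habs)
        rw [abs_lt] at hclose
        rw [if_pos hcond, if_pos (show gEK N n ≤ b + δ by linarith [hcond.2]),
          if_neg (show ¬ gEK N n ≤ a - δ by push_neg; linarith [hcond.1])]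
        norm_num
      · rw [if_neg hcond]
        split_ifs <;> linarith
  have hsum := Finset.sum_le_sum key
  rw [Finset.sum_add_distrib, Finset.sum_sub_distrib] at hsum
  linarith [indicator_sqrt_sum N]

lemma count_lower (N : ℕ) (a b δ : ℝ) (hδ : 0 < δ) (hab : a < b)
    (h0 : ∀ n : ℕ, Nat.sqrt N < n → n ≤ N →
      1 ≤ Real.log (Real.log n) ∧ Real.log (Real.log n) ≤ Real.log (Real.log N) ∧
      (|a| + |b| + δ + 1) * (Real.log (Real.log N) - Real.log (Real.log n)) /
          Real.log (Real.log n)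
        + (Real.log (Real.log N) - Real.log (Real.log n)) / Real.sqrt (Real.log (Real.log n))
        < δ) :
    ((∑ n ∈ Finset.Icc 1 N, if gEK N n ≤ b - δ then (1:ℝ) else 0)
      - ∑ n ∈ Finset.Icc 1 N, if gEK N n ≤ a + δ then (1:ℝ) else 0) - (Nat.sqrt N : ℝ)
      ≤ ∑ n ∈ Finset.Icc 1 N, if a ≤ fEK n ∧ fEK n ≤ b then (1:ℝ) else 0 := by
  set M := |a| + |b| + δ + 1 with hM
  have hM0 : 0 ≤ M := by positivity
  have key : ∀ n ∈ Finset.Icc 1 N,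
      ((if gEK N n ≤ b - δ then (1:ℝ) else 0) - (if gEK N n ≤ a + δ then (1:ℝ) else 0))
          - (if n ≤ Nat.sqrt N then (1:ℝ) else 0)
        ≤ (if a ≤ fEK n ∧ fEK n ≤ b then (1:ℝ) else 0) := by
    intro n hn
    rw [Finset.mem_Icc] at hn
    by_cases hK : n ≤ Nat.sqrt N
    · rw [if_pos hK]
      split_ifs <;> linarith
    · rw [if_neg hK]
      obtain ⟨hℓ1, hℓL, hbound⟩ := h0 n (not_le.1 hK) hn.2
      by_cases hgb : gEK N n ≤ b - δ
      · by_cases hga : gEK N n ≤ a + δ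
        · rw [if_pos hgb, if_pos hga]
          split_ifs <;> linarith
        · have habs : |gEK N n| ≤ M := by
            rw [abs_le, hM]
            push_neg at hga
            constructor
            · linarith [neg_abs_le a, abs_nonneg b]
            · linarith [le_abs_self b, abs_nonneg a]
          have hclose : |gEK N n - fEK n| < δ :=
            core_close (omegaPF n) _ _ M δ hℓ1 hℓL hM0 hbound (Or.inr habs)
          rw [abs_lt] at hclose
          push_neg at hga
          have hcond : a ≤ fEK n ∧ fEK n ≤ b := by
            constructor <;> [linarith; linarith]
          rw [if_pos hgb, if_neg (not_le.2 hga), if_pos hcond]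
          norm_num
      · rw [if_neg hgb]
        split_ifs <;> linarith
  have hsum := Finset.sum_le_sum key
  rw [Finset.sum_sub_distrib, Finset.sum_sub_distrib] at hsum
  linarith [indicator_sqrt_sum N]

end ErdosKacAux

theorem erdos_kac_normalization_at_N_implies_at_n
    (hEK : ∀ b : ℝ,
      Tendsto (fun N : ℕ =>
          (∑ n ∈ Finset.Icc 1 N,
            if ((omegaPF n : ℝ) - Real.log (Real.log N)) / Real.sqrt (Real.log (Real.log N)) ≤ b
            then (1 : ℝ) else 0) / N)
        atTop (nhds (stdNormalCDF b))) :
    ∀ a b : ℝ, a < b →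
      Tendsto (fun N : ℕ =>
          (∑ n ∈ Finset.Icc 1 N,
            if a ≤ ((omegaPF n : ℝ) - Real.log (Real.log n)) / Real.sqrt (Real.log (Real.log n)) ∧
               ((omegaPF n : ℝ) - Real.log (Real.log n)) / Real.sqrt (Real.log (Real.log n)) ≤ b
            then (1 : ℝ) else 0) / N)
        atTop
        (nhds ((1 / Real.sqrt (2 * Real.pi)) * ∫ x in a..b, Real.exp (-x ^ 2 / 2))) := by
  intro a b hab
  have hEK' : ∀ c : ℝ,
      Tendsto (fun N : ℕ =>
        (∑ n ∈ Finset.Icc 1 N, if gEK N n ≤ c then (1:ℝ) else 0) / N)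
        atTop (nhds (stdNormalCDF c)) := hEK
  show Tendsto (fun N : ℕ =>
      (∑ n ∈ Finset.Icc 1 N, if a ≤ fEK n ∧ fEK n ≤ b then (1:ℝ) else 0) / N) atTop
      (nhds ((1 / Real.sqrt (2 * Real.pi)) * ∫ x in a..b, Real.exp (-x ^ 2 / 2)))
  rw [← stdNormalCDF_sub a b]
  rw [Metric.tendsto_nhds]
  intro ε hε
  set δ := min (ε / 8) ((b - a) / 4) with hδdef
  have hδpos : 0 < δ := lt_min (by linarith) (by linarith)
  have hδ1 : δ ≤ ε / 8 := min_le_left _ _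
  have hδ2 : δ ≤ (b - a) / 4 := min_le_right _ _
  set M := |a| + |b| + δ + 1 with hMdef
  have hM0 : (0:ℝ) ≤ M := by positivity
  have hd : ∀ c : ℝ, ∀ᶠ N : ℕ in atTop,
      |(∑ n ∈ Finset.Icc 1 N, if gEK N n ≤ c then (1:ℝ) else 0) / N - stdNormalCDF c|
        < ε / 8 := by
    intro c
    have := (Metric.tendsto_nhds.1 (hEK' c)) (ε / 8) (by linarith)
    simpa [Real.dist_eq] using this
  have hsq : ∀ᶠ N : ℕ in atTop, (Nat.sqrt N : ℝ) / N < ε / 8 := by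
    have := (Metric.tendsto_nhds.1 sqrtN_div_tendsto) (ε / 8) (by linarith)
    filter_upwards [this] with N hN
    rw [Real.dist_eq, sub_zero] at hN
    exact lt_of_le_of_lt (le_abs_self _) hN
  filter_upwards [key_eventually δ M hδpos hM0, hd (b + δ), hd (a - δ), hd (b - δ),
    hd (a + δ), hsq, eventually_ge_atTop 1] with N h0 h1 h2 h3 h4 h5 h6
  have hNpos : (0:ℝ) < N := by exact_mod_cast h6
  set T := ∑ n ∈ Finset.Icc 1 N, if a ≤ fEK n ∧ fEK n ≤ b then (1:ℝ) else 0 with hT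
  set SB := ∑ n ∈ Finset.Icc 1 N, if gEK N n ≤ b + δ then (1:ℝ) else 0 with hSB
  set SA := ∑ n ∈ Finset.Icc 1 N, if gEK N n ≤ a - δ then (1:ℝ) else 0 with hSA
  set SB' := ∑ n ∈ Finset.Icc 1 N, if gEK N n ≤ b - δ then (1:ℝ) else 0 with hSB'
  set SA' := ∑ n ∈ Finset.Icc 1 N, if gEK N n ≤ a + δ then (1:ℝ) else 0 with hSA'
  have hup := count_upper N a b δ hδpos hab h0
  have hlo := count_lower N a b δ hδpos hab h0
  have hupd : T / N ≤ (Nat.sqrt N : ℝ) / N + (SB / N - SA / N) := by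
    calc T / N ≤ ((Nat.sqrt N : ℝ) + (SB - SA)) / N := by gcongr
      _ = (Nat.sqrt N : ℝ) / N + (SB / N - SA / N) := by ring
  have hlod : (SB' / N - SA' / N) - (Nat.sqrt N : ℝ) / N ≤ T / N := by
    calc (SB' / N - SA' / N) - (Nat.sqrt N : ℝ) / N
        = ((SB' - SA') - (Nat.sqrt N : ℝ)) / N := by ring
      _ ≤ T / N := by gcongr
  have e1 := abs_lt.1 h1
  have e2 := abs_lt.1 h2
  have e3 := abs_lt.1 h3
  have e4 := abs_lt.1 h4
  have i1 := stdNormalCDF_incr (show b ≤ b + δ by linarith)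
  have i2 := stdNormalCDF_incr (show a - δ ≤ a by linarith)
  have i3 := stdNormalCDF_incr (show b - δ ≤ b by linarith)
  have i4 := stdNormalCDF_incr (show a ≤ a + δ by linarith)
  have hsqnn : (0:ℝ) ≤ (Nat.sqrt N : ℝ) / N := by positivity
  rw [Real.dist_eq, abs_lt]
  constructor
  · linarith
  · linarith
end
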